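/- For every x in (0,1], liminf_{n→∞} S_n(x)/2^n ≤ 1, where S_n is the Birkhoff sum of the Saint-Petersburg potential under the doubling map. -/

import Mathlib

open Filter Set MeasureTheory
open scoped ENNReal Classical

/-- The doubling map on `(0,1]`. -/
noncomputable def T (x : ℝ) : ℝ := 2 * x - ⌈2 * x⌉ + 1

/-- The Saint-Petersburg potential: `phi x = 2^k` for `x ∈ (2^{-k-1}, 2^{-k}]`. -/
noncomputable def phi (x : ℝ) : ℝ := 2 ^ ⌊Real.logb 2 x⁻¹⌋

/-- Birkhoff sums of the Saint-Petersburg potential under the doubling map. -/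
noncomputable def S (n : ℕ) (x : ℝ) : ℝ := ∑ j ∈ Finset.range n, phi (T^[j] x)

/-- The `n`-th binary digit of `x` (for `n ≥ 1`): `eps n x = ⌈2 T^{n-1} x⌉ - 1`. -/
noncomputable def eps (n : ℕ) (x : ℝ) : ℤ := ⌈2 * T^[n-1] x⌉ - 1

lemma phi_pos (y : ℝ) : 0 < phi y := by
  unfold phi
  positivity

lemma S_nonneg (n : ℕ) (x : ℝ) : 0 ≤ S n x :=
  Finset.sum_nonneg fun j _ => (phi_pos _).le

lemma T_low {x : ℝ} (h1 : 0 < x) (h2 : x ≤ 1/2) : T x = 2 * x := by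
  have hc : ⌈(2:ℝ) * x⌉ = 1 := by
    rw [Int.ceil_eq_iff]
    push_cast
    constructor <;> linarith
  rw [T, hc]
  push_cast
  ring

lemma T_high {x : ℝ} (h1 : 1/2 < x) (h2 : x ≤ 1) : T x = 2 * x - 1 := by
  have hc : ⌈(2:ℝ) * x⌉ = 2 := by
    rw [Int.ceil_eq_iff]
    push_cast
    constructor <;> linarith
  rw [T, hc]
  push_cast
  ring

lemma T_mem {x : ℝ} (hx : x ∈ Set.Ioc (0:ℝ) 1) : T x ∈ Set.Ioc (0:ℝ) 1 := by
  obtain ⟨h0, h1⟩ := hx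
  rcases le_or_gt x (1/2) with h | h
  · rw [T_low h0 h]; constructor <;> linarith
  · rw [T_high h h1]; constructor <;> linarith

lemma iter_mem {x : ℝ} (hx : x ∈ Set.Ioc (0:ℝ) 1) (j : ℕ) : T^[j] x ∈ Set.Ioc (0:ℝ) 1 := by
  induction j with
  | zero => simpa using hx
  | succ k ih => rw [Function.iterate_succ_apply']; exact T_mem ih

lemma phi_high {y : ℝ} (h1 : 1/2 < y) (h2 : y ≤ 1) : phi y = 1 := by
  have hy : (0:ℝ) < y := by linarith
  have hi1 : 1 ≤ y⁻¹ := one_le_inv_iff₀.mpr ⟨hy, h2⟩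
  have hi2 : y⁻¹ < 2 := by
    rw [inv_lt_comm₀ hy (by norm_num)]
    linarith
  have hfl : ⌊Real.logb 2 y⁻¹⌋ = 0 := by
    rw [Int.floor_eq_zero_iff]
    constructor
    · exact Real.logb_nonneg (by norm_num) hi1
    · calc Real.logb 2 y⁻¹ < Real.logb 2 2 :=
            Real.logb_lt_logb (by norm_num) (by positivity) hi2
        _ = 1 := Real.logb_self_eq_one (by norm_num)
  rw [phi, hfl]
  norm_num

lemma phi_double {y : ℝ} (h1 : 0 < y) (h2 : y ≤ 1/2) : phi y = 2 * phi (2*y) := by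
  have h2y : (0:ℝ) < 2*y := by linarith
  have key : y⁻¹ = 2 * (2*y)⁻¹ := by
    field_simp
  rw [phi, phi, key, Real.logb_mul (by norm_num) (by positivity),
    Real.logb_self_eq_one (by norm_num), add_comm,
    Int.floor_add_one, zpow_add₀ (two_ne_zero)]
  ring

lemma phi_le_aux : ∀ n : ℕ, ∀ x : ℝ, x ∈ Set.Ioc (0:ℝ) 1 →
    T^[n] x ∈ Set.Ioc (1/2 : ℝ) 1 → phi x ≤ 2 ^ n := by
  intro n
  induction n with
  | zero =>
    intro x hx h
    simp only [Function.iterate_zero_apply] at h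
    rw [phi_high h.1 h.2]
    norm_num
  | succ k ih =>
    intro x hx h
    rcases le_or_gt x (1/2) with hl | hl
    · have hTx : T x = 2 * x := T_low hx.1 hl
      have hTmem : T x ∈ Set.Ioc (0:ℝ) 1 := T_mem hx
      have h' : T^[k] (T x) ∈ Set.Ioc (1/2 : ℝ) 1 := by
        rwa [← Function.iterate_succ_apply]
      have := ih (T x) hTmem h'
      rw [phi_double hx.1 hl, ← hTx]
      calc 2 * phi (T x) ≤ 2 * 2 ^ k := by linarith [this]
        _ = 2 ^ (k+1) := by ring
    · rw [phi_high hl hx.2]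
      exact one_le_pow₀ (by norm_num)

lemma S_le : ∀ n : ℕ, ∀ x : ℝ, x ∈ Set.Ioc (0:ℝ) 1 →
    T^[n] x ∈ Set.Ioc (1/2 : ℝ) 1 → S (n+1) x ≤ 2 ^ (n+1) := by
  intro n
  induction n with
  | zero =>
    intro x hx h
    simp only [Function.iterate_zero_apply] at h
    rw [S, Finset.sum_range_one, Function.iterate_zero_apply, phi_high h.1 h.2]
    norm_num
  | succ k ih =>
    intro x hx h
    have hTmem : T x ∈ Set.Ioc (0:ℝ) 1 := T_mem hx
    have h' : T^[k] (T x) ∈ Set.Ioc (1/2 : ℝ) 1 := by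
      rwa [← Function.iterate_succ_apply]
    have hS : S (k+2) x = phi x + S (k+1) (T x) := by
      rw [S, S, Finset.sum_range_succ']
      simp only [Function.iterate_zero_apply, Function.iterate_succ_apply]
      ring
    have h1 : S (k+1) (T x) ≤ 2 ^ (k+1) := ih (T x) hTmem h'
    have h2 : phi x ≤ 2 ^ (k+1) := phi_le_aux (k+1) x hx h
    rw [hS]
    calc phi x + S (k+1) (T x) ≤ 2 ^ (k+1) + 2 ^ (k+1) := by linarith
      _ = 2 ^ (k+2) := by ring

lemma ones {x : ℝ} (hx : x ∈ Set.Ioc (0:ℝ) 1) (N : ℕ) :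
    ∃ j ≥ N, T^[j] x ∈ Set.Ioc (1/2 : ℝ) 1 := by
  by_contra hcon
  push_neg at hcon
  have hsmall : ∀ j ≥ N, T^[j] x ≤ 1/2 := by
    intro j hj
    by_contra hb
    push_neg at hb
    exact hcon j hj ⟨hb, (iter_mem hx j).2⟩
  have hgrow : ∀ k : ℕ, T^[N + k] x = 2 ^ k * T^[N] x := by
    intro k
    induction k with
    | zero => simp
    | succ m ihm =>
      have hmem := iter_mem hx (N + m)
      have : T^[N + (m+1)] x = T (T^[N+m] x) := by
        rw [show N + (m+1) = (N+m)+1 by ring, Function.iterate_succ_apply']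
      rw [this, T_low hmem.1 (hsmall _ (by omega)), ihm]
      ring
  have hpos : 0 < T^[N] x := (iter_mem hx N).1
  obtain ⟨k, hk⟩ := pow_unbounded_of_one_lt ((1/2) / T^[N] x) (by norm_num : (1:ℝ) < 2)
  have hle : T^[N + k] x ≤ 1/2 := hsmall _ (by omega)
  rw [hgrow k] at hle
  have : (1/2) / T^[N] x < 2 ^ k := hk
  rw [div_lt_iff₀ hpos] at this
  linarith

theorem saint_petersburg_stmt2 (x : ℝ) (hx : x ∈ Set.Ioc (0 : ℝ) 1) :
    Filter.liminf (fun n : ℕ => S n x / 2 ^ n) Filter.atTop ≤ 1 := by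
  have hfreq : ∃ᶠ n in atTop, S n x / 2 ^ n ≤ 1 := by
    rw [Filter.frequently_atTop]
    intro N
    obtain ⟨j, hjN, hj⟩ := ones hx N
    refine ⟨j + 1, by omega, ?_⟩
    rw [div_le_one (by positivity)]
    exact S_le j x hx hj
  refine Filter.liminf_le_of_frequently_le hfreq ?_
  exact ⟨0, Filter.eventually_map.mpr (Filter.Eventually.of_forall fun n => by
    have := S_nonneg n x
    positivity)⟩
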